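/- Let f = min_{i∈I} f_i on open X ⊆ ℝⁿ with I finite and each f_i Hadamard directionally differentiable at x̄ with sublinear derivative. Then for every unit vector p and every y ∈ ⋂_{i∈I(x̄,p)} Argmax_{v∈∂f_i(x̄)} ⟨v,p⟩, there exist sequences x_k → x̄ with (x_k − x̄)/‖x_k − x̄‖ → p, and y_k → y with y_k ∈ ∂f(x_k) (Fréchet subdifferential) for all k. -/

import Mathlib

open Filter Topology Set Metric
open scoped RealInnerProductSpace

noncomputable section

/-- `n`-dimensional Euclidean space. -/
abbrev En (n : ℕ) := EuclideanSpace ℝ (Fin n)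

/-- `d` is the Hadamard directional derivative map of `f` at `x`:
for each direction `p`, `(f (x + t • p') - f x)/t → d p` as `t ↓ 0`, `p' → p`. -/
def HadamardDD {n : ℕ} (f : En n → ℝ) (x : En n) (d : En n → ℝ) : Prop :=
  ∀ p : En n,
    Tendsto (fun q : ℝ × En n => (f (x + q.1 • q.2) - f x) / q.1)
      ((𝓝[>] (0 : ℝ)) ×ˢ 𝓝 p) (𝓝 (d p))

/-- The Fréchet subdifferential of `f` at `x`. -/
def FSubdiff {n : ℕ} (f : En n → ℝ) (x : En n) : Set (En n) :=
  {v | ∀ ε > (0 : ℝ), ∀ᶠ y in 𝓝 x, f y - f x - ⟪v, y - x⟫ ≥ -ε * ‖y - x‖}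

/-- The outer (Painlevé–Kuratowski) limit of Fréchet subdifferentials of `f`
along sequences `x_k → xb` with `f x_k > f xb`. -/
def OuterLim {n : ℕ} (f : En n → ℝ) (xb : En n) : Set (En n) :=
  {y | ∃ xk yk : ℕ → En n, Tendsto xk atTop (𝓝 xb) ∧ (∀ k, f xb < f (xk k)) ∧
    (∀ k, yk k ∈ FSubdiff f (xk k)) ∧ Tendsto yk atTop (𝓝 y)}

lemma extract_prod {n : ℕ} {p : En n} {P : ℝ × En n → Prop}
    (h : ∀ᶠ q in (𝓝[>] (0:ℝ)) ×ˢ 𝓝 p, P q) :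
    ∃ δ > 0, ∀ t : ℝ, ∀ q : En n, 0 < t → t < δ → ‖q - p‖ < δ → P (t, q) := by
  rw [Filter.eventually_prod_iff] at h
  obtain ⟨pa, hpa, pb, hpb, himp⟩ := h
  have hpa' : {t : ℝ | pa t} ∈ 𝓝[>] (0:ℝ) := hpa
  rw [Metric.mem_nhdsWithin_iff] at hpa'
  obtain ⟨δ₁, hδ₁, hsub⟩ := hpa'
  rw [Metric.eventually_nhds_iff] at hpb
  obtain ⟨δ₂, hδ₂, hq⟩ := hpb
  refine ⟨min δ₁ δ₂, lt_min hδ₁ hδ₂, fun t q ht htδ hqδ => ?_⟩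
  refine himp (hsub ⟨?_, ht⟩) (hq ?_)
  · simpa [Real.dist_eq, abs_of_pos ht] using lt_of_lt_of_le htδ (min_le_left _ _)
  · rw [dist_eq_norm]; exact lt_of_lt_of_le hqδ (min_le_right _ _)

lemma extract_right {P : ℝ → Prop} (h : ∀ᶠ t in 𝓝[>] (0:ℝ), P t) :
    ∃ δ > 0, ∀ t : ℝ, 0 < t → t < δ → P t := by
  have h' : {t : ℝ | P t} ∈ 𝓝[>] (0:ℝ) := h
  rw [Metric.mem_nhdsWithin_iff] at h'
  obtain ⟨δ, hδ, hsub⟩ := h'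
  exact ⟨δ, hδ, fun t ht htδ => hsub ⟨by simpa [Real.dist_eq, abs_of_pos ht] using htδ, ht⟩⟩

lemma tendsto_base {n : ℕ} {xb p : En n} :
    Tendsto (fun q : ℝ × En n => xb + q.1 • q.2) ((𝓝[>] (0:ℝ)) ×ˢ 𝓝 p) (𝓝 xb) := by
  have hc : Continuous (fun q : ℝ × En n => xb + q.1 • q.2) :=
    continuous_const.add (continuous_fst.smul continuous_snd)
  have h1 : ((𝓝[>] (0:ℝ)) ×ˢ 𝓝 p) ≤ 𝓝 ((0:ℝ), p) := by
    rw [nhds_prod_eq]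
    exact Filter.prod_mono nhdsWithin_le_nhds le_rfl
  have := (hc.tendsto ((0:ℝ), p)).mono_left h1
  simpa using this

set_option maxHeartbeats 1000000 in
lemma key {n : ℕ} {ι : Type*} [Fintype ι]
    (fi : ι → En n → ℝ) (f : En n → ℝ)
    (hf : ∀ x : En n, IsLeast (Set.range fun i => fi i x) (f x))
    (xb : En n)
    (hcont : ∀ i, Continuous (fi i))
    (di : ι → En n → ℝ) (hdd : ∀ i, HadamardDD (fi i) xb (di i))
    (p : En n) (hp : ‖p‖ = 1) (y : En n)
    (hy : ∀ i : ι,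
      (fi i xb = f xb ∧ ∀ i' : ι, fi i' xb = f xb → di i p ≤ di i' p) →
        y ∈ FSubdiff (fi i) xb ∧ ⟪y, p⟫ = di i p)
    {ε : ℝ} (hε : 0 < ε) :
    ∃ x v : En n, x ≠ xb ∧ ‖x - xb‖ ≤ ε ∧ ‖‖x - xb‖⁻¹ • (x - xb) - p‖ ≤ ε ∧
      v ∈ FSubdiff f x ∧ ‖v - y‖ ≤ ε := by
  classical
  obtain ⟨j0, hj0⟩ := (hf xb).1
  have hlb : ∀ x i, f x ≤ fi i x := fun x i => (hf x).2 ⟨i, rfl⟩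
  set A : Finset ι := Finset.univ.filter (fun i => fi i xb = f xb) with hA
  have hAne : A.Nonempty := ⟨j0, by simp [hA, hj0]⟩
  obtain ⟨i0, hi0A, hi0min⟩ := A.exists_min_image (fun i => di i p) hAne
  have hi0act : fi i0 xb = f xb := (Finset.mem_filter.mp hi0A).2
  have hi0 : fi i0 xb = f xb ∧ ∀ i', fi i' xb = f xb → di i0 p ≤ di i' p :=
    ⟨hi0act, fun i' h' => hi0min i' (by simp [hA, h'])⟩
  set dstar := di i0 p with hdstar
  have hyp : ⟪y, p⟫ = dstar := (hy i0 hi0).2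
  -- Structure: eventually, non-minimal indices are beaten by i0
  have hstruct_ev : ∀ᶠ q in (𝓝[>] (0:ℝ)) ×ˢ 𝓝 p, ∀ i,
      ¬ (fi i xb = f xb ∧ ∀ i', fi i' xb = f xb → di i p ≤ di i' p) →
      fi i0 (xb + q.1 • q.2) < fi i (xb + q.1 • q.2) := by
    rw [Filter.eventually_all]
    intro i
    by_cases hIi : (fi i xb = f xb ∧ ∀ i', fi i' xb = f xb → di i p ≤ di i' p)
    · exact Filter.Eventually.of_forall (fun q h => absurd hIi h)
    by_cases hact : fi i xb = f xb
    · -- active but not minimal: use Hadamard derivatives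
      have hex : ∃ i', fi i' xb = f xb ∧ di i' p < di i p := by
        by_contra hcon
        push_neg at hcon
        exact hIi ⟨hact, fun i' h' => hcon i' h'⟩
      obtain ⟨i', hi'act, hi'lt⟩ := hex
      have hgap : dstar < di i p := lt_of_le_of_lt (hi0.2 i' hi'act) hi'lt
      have hdiff : Tendsto (fun q : ℝ × En n =>
          (fi i (xb + q.1 • q.2) - fi i xb) / q.1 - (fi i0 (xb + q.1 • q.2) - fi i0 xb) / q.1)
          ((𝓝[>] (0:ℝ)) ×ˢ 𝓝 p) (𝓝 (di i p - dstar)) := (hdd i p).sub (hdd i0 p)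
      have hgt : ∀ᶠ q in (𝓝[>] (0:ℝ)) ×ˢ 𝓝 p,
          0 < (fi i (xb + q.1 • q.2) - fi i xb) / q.1 - (fi i0 (xb + q.1 • q.2) - fi i0 xb) / q.1 :=
        hdiff.eventually_const_lt (by linarith)
      have hposq : ∀ᶠ q : ℝ × En n in (𝓝[>] (0:ℝ)) ×ˢ 𝓝 p, 0 < q.1 :=
        (eventually_mem_nhdsWithin).prod_inl _
      filter_upwards [hgt, hposq] with q h1 h2 _
      have hne : q.1 ≠ 0 := ne_of_gt h2
      have heq : q.1 * ((fi i (xb + q.1 • q.2) - fi i xb) / q.1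
          - (fi i0 (xb + q.1 • q.2) - fi i0 xb) / q.1)
          = fi i (xb + q.1 • q.2) - fi i0 (xb + q.1 • q.2) := by
        field_simp
        rw [hact, hi0act]
        ring
      nlinarith [mul_pos h2 h1]
    · -- inactive: use continuity
      have hlt : f xb < fi i xb := lt_of_le_of_ne (hlb xb i) (Ne.symm hact)
      have t1 : Tendsto (fun q : ℝ × En n => fi i0 (xb + q.1 • q.2))
          ((𝓝[>] (0:ℝ)) ×ˢ 𝓝 p) (𝓝 (fi i0 xb)) := ((hcont i0).tendsto xb).comp tendsto_base
      have t2 : Tendsto (fun q : ℝ × En n => fi i (xb + q.1 • q.2))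
          ((𝓝[>] (0:ℝ)) ×ˢ 𝓝 p) (𝓝 (fi i xb)) := ((hcont i).tendsto xb).comp tendsto_base
      have := t1.eventually_lt t2 (by rw [hi0act]; exact hlt)
      filter_upwards [this] with q hq _ using hq
  obtain ⟨δs, hδs, hstruct⟩ := extract_prod hstruct_ev
  -- parameters
  set ρ : ℝ := min (ε/2) (min (δs/2) (1/2)) with hρdef
  have hρ : 0 < ρ := by positivity
  have hρε : ρ ≤ ε/2 := min_le_left _ _
  have hρδs : ρ < δs := lt_of_le_of_lt (le_trans (min_le_right _ _) (min_le_left _ _)) (by linarith)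
  have hρhalf : ρ ≤ 1/2 := le_trans (min_le_right _ _) (min_le_right _ _)
  set ε₂ : ℝ := ε * ρ / 24 with hε₂def
  have hε₂ : 0 < ε₂ := by positivity
  -- lower bound near xb for minimal active indices
  have hlow_ev : ∀ᶠ x in 𝓝 xb, ∀ i,
      (fi i xb = f xb ∧ ∀ i', fi i' xb = f xb → di i p ≤ di i' p) →
      fi i x - f xb - ⟪y, x - xb⟫ ≥ -ε₂ * ‖x - xb‖ := by
    rw [Filter.eventually_all]
    intro i
    by_cases hIi : (fi i xb = f xb ∧ ∀ i', fi i' xb = f xb → di i p ≤ di i' p)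
    · have := (hy i hIi).1 ε₂ hε₂
      filter_upwards [this] with x hx _
      rw [← hIi.1]
      exact hx
    · exact Filter.Eventually.of_forall (fun x h => absurd h hIi)
  obtain ⟨δ₂, hδ₂, hlow⟩ := Metric.eventually_nhds_iff.mp hlow_ev
  -- upper bound along the ray
  have hup_ev : ∀ᶠ t : ℝ in 𝓝[>] (0:ℝ),
      (fi i0 (xb + t • p) - fi i0 xb) / t < dstar + ε₂ := by
    have hdiag : Tendsto (fun s : ℝ => (s, p)) (𝓝[>] (0:ℝ)) ((𝓝[>] (0:ℝ)) ×ˢ 𝓝 p) :=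
      Tendsto.prodMk tendsto_id tendsto_const_nhds
    have h1 := (hdd i0 p).comp hdiag
    have h2 := h1.eventually_lt_const (show dstar < dstar + ε₂ by linarith)
    exact h2
  obtain ⟨δu, hδu, hup⟩ := extract_right hup_ev
  -- choose t
  set m : ℝ := min (min δs δu) (min δ₂ ε) with hmdef
  have hm : 0 < m := by positivity
  set t : ℝ := m / 4 with htdef
  have ht : 0 < t := by positivity
  have htδs : t < δs := by
    have : m ≤ δs := le_trans (min_le_left _ _) (min_le_left _ _)
    simp only [htdef]; linarith
  have htδu : t < δu := by
    have : m ≤ δu := le_trans (min_le_left _ _) (min_le_right _ _)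
    simp only [htdef]; linarith
  have h2tδ₂ : 2 * t < δ₂ := by
    have : m ≤ δ₂ := le_trans (min_le_right _ _) (min_le_left _ _)
    simp only [htdef]; linarith
  have h2tε : 2 * t ≤ ε := by
    have : m ≤ ε := le_trans (min_le_right _ _) (min_le_right _ _)
    simp only [htdef]; linarith
  set z : En n := xb + t • p with hzdef
  set K : ℝ := 12 * ε₂ / (ρ^2 * t) with hKdef
  have hK : 0 < K := by positivity
  set φ : En n → ℝ := fun x => f x - ⟪y, x - xb⟫ + K * ‖x - z‖^2 with hφdef
  -- continuity of f
  have hfeq : ∀ x, f x = Finset.univ.inf' ⟨j0, Finset.mem_univ _⟩ (fun i => fi i x) := by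
    intro x
    refine le_antisymm (Finset.le_inf' _ _ fun b _ => hlb x b) ?_
    obtain ⟨j, hj⟩ := (hf x).1
    have hj' : fi j x = f x := hj
    rw [← hj']
    exact Finset.inf'_le _ (Finset.mem_univ j)
  have hcf : Continuous f := by
    have : f = fun x => Finset.univ.inf' ⟨j0, Finset.mem_univ _⟩ (fun i => fi i x) :=
      funext hfeq
    rw [this]
    exact continuous_iff_continuousAt.mpr fun x =>
      ContinuousAt.finset_inf'_apply _ fun i _ => (hcont i).continuousAt
  have hφc : Continuous φ := by
    apply Continuous.add
    · exact hcf.sub (continuous_const.inner (continuous_id.sub continuous_const))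
    · exact continuous_const.mul (((continuous_id.sub continuous_const).norm).pow 2)
  -- minimize φ over the closed ball
  have hballc : IsCompact (Metric.closedBall z (ρ*t)) := isCompact_closedBall z (ρ*t)
  obtain ⟨xh, hxhB, hxhmin⟩ := hballc.exists_isMinOn
    ⟨z, Metric.mem_closedBall_self (by positivity)⟩ hφc.continuousOn
  -- facts about points of the ball
  have hball : ∀ x ∈ Metric.closedBall z (ρ*t),
      ‖x - xb‖ ≤ 2*t ∧ f x - f xb - ⟪y, x - xb⟫ ≥ -(2*ε₂*t) := by
    intro x hx
    rw [Metric.mem_closedBall, dist_eq_norm] at hx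
    have hxxb : x - xb = t • p + (x - z) := by
      simp only [hzdef]; abel
    have hnorm : ‖x - xb‖ ≤ 2*t := by
      rw [hxxb]
      calc ‖t • p + (x - z)‖ ≤ ‖t • p‖ + ‖x - z‖ := norm_add_le _ _
        _ ≤ t + ρ * t := by
            rw [norm_smul, hp, Real.norm_eq_abs, abs_of_pos ht]; simpa using hx
        _ ≤ 2*t := by nlinarith
    refine ⟨hnorm, ?_⟩
    -- structural claim : the min is attained at a "minimal active" index
    set q : En n := p + t⁻¹ • (x - z) with hqdef
    have hxq : xb + t • q = x := by
      simp only [hqdef, smul_add, smul_smul, mul_inv_cancel₀ (ne_of_gt ht), one_smul, hzdef]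
      abel
    have hqp : ‖q - p‖ < δs := by
      have : q - p = t⁻¹ • (x - z) := by simp only [hqdef]; abel
      rw [this, norm_smul, Real.norm_eq_abs, abs_of_pos (inv_pos.mpr ht)]
      calc t⁻¹ * ‖x - z‖ ≤ t⁻¹ * (ρ * t) := by
            apply mul_le_mul_of_nonneg_left hx (le_of_lt (inv_pos.mpr ht))
        _ = ρ := by field_simp
        _ < δs := hρδs
    have hstr := hstruct t q ht htδs hqp
    rw [hxq] at hstr
    obtain ⟨j, hj0'⟩ := (hf x).1
    have hj : fi j x = f x := hj0'
    have hjI : (fi j xb = f xb ∧ ∀ i', fi i' xb = f xb → di j p ≤ di i' p) := by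
      by_contra hcon
      have := hstr j hcon
      have h2 : f x ≤ fi i0 x := hlb x i0
      rw [hj] at this
      linarith
    have hdist : dist x xb < δ₂ := by
      rw [dist_eq_norm]; linarith
    have := hlow hdist j hjI
    rw [hj] at this
    nlinarith [norm_nonneg (x - xb)]
  -- upper bound for φ z
  have hφz : φ z ≤ f xb + ε₂ * t := by
    have h1 := hup t ht htδu
    have h2 : fi i0 (xb + t • p) - fi i0 xb < t * (dstar + ε₂) := by
      rw [div_lt_iff₀ ht] at h1
      linarith
    have h3 : f z ≤ fi i0 z := hlb z i0
    have h4 : ⟪y, z - xb⟫ = t * dstar := by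
      have : z - xb = t • p := by simp only [hzdef]; abel
      rw [this, real_inner_smul_right, hyp]
    simp only [hφdef, h4, sub_self, norm_zero]
    rw [hi0act] at h2
    have : (0:ℝ)^2 = 0 := by norm_num
    rw [this, mul_zero, add_zero]
    simp only [hzdef] at h3 h2 ⊢
    linarith
  -- bound on ‖xh - z‖
  have hxhz : ‖xh - z‖ ≤ ρ * t / 2 := by
    have h1 : φ xh ≤ φ z := hxhmin (Metric.mem_closedBall_self (by positivity))
    have h2 := (hball xh hxhB).2
    have h3 : K * ‖xh - z‖^2 ≤ 3 * ε₂ * t := by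
      simp only [hφdef] at h1 hφz
      linarith
    have h4 : ‖xh - z‖^2 ≤ (ρ * t / 2)^2 := by
      rw [hKdef] at h3
      rw [div_mul_eq_mul_div, div_le_iff₀ (by positivity)] at h3
      nlinarith
    nlinarith [norm_nonneg (xh - z), mul_pos hρ ht]
  -- the subgradient
  set v : En n := y - (2*K) • (xh - z) with hvdef
  have hvy : ‖v - y‖ ≤ ε := by
    have : v - y = -((2*K) • (xh - z)) := by simp only [hvdef]; abel
    rw [this, norm_neg, norm_smul, Real.norm_eq_abs, abs_of_pos (by positivity : (0:ℝ) < 2*K)]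
    have : 2 * K * ‖xh - z‖ ≤ 2 * K * (ρ * t / 2) :=
      mul_le_mul_of_nonneg_left hxhz (by positivity)
    have hKρt : 2 * K * (ρ * t / 2) = 12 * ε₂ / ρ := by
      rw [hKdef]; field_simp
    have hε₂ρ : 12 * ε₂ / ρ = ε / 2 := by
      rw [hε₂def]; field_simp; ring
    linarith
  have hvF : v ∈ FSubdiff f xh := by
    intro ε' hε'
    rw [Metric.eventually_nhds_iff]
    refine ⟨min (ε'/K) (ρ*t/2), by positivity, fun x' hx' => ?_⟩
    rw [dist_eq_norm] at hx'
    have hu1 : ‖x' - xh‖ < ε'/K := lt_of_lt_of_le hx' (min_le_left _ _)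
    have hu2 : ‖x' - xh‖ < ρ*t/2 := lt_of_lt_of_le hx' (min_le_right _ _)
    have hx'B : x' ∈ Metric.closedBall z (ρ*t) := by
      rw [Metric.mem_closedBall, dist_eq_norm]
      have : x' - z = (x' - xh) + (xh - z) := by abel
      rw [this]
      calc ‖(x' - xh) + (xh - z)‖ ≤ ‖x' - xh‖ + ‖xh - z‖ := norm_add_le _ _
        _ ≤ ρ*t := by linarith
    have hmin : φ xh ≤ φ x' := hxhmin hx'B
    have hexp : K * ‖x' - z‖^2 = K * ‖xh - z‖^2 + 2*K*⟪xh - z, x' - xh⟫ + K * ‖x' - xh‖^2 := by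
      have h5 : x' - z = (xh - z) + (x' - xh) := by abel
      rw [h5, norm_add_sq_real]; ring
    have hinner : ⟪v, x' - xh⟫ = ⟪y, x' - xh⟫ - 2*K*⟪xh - z, x' - xh⟫ := by
      simp only [hvdef]
      rw [inner_sub_left, real_inner_smul_left]
    have hyy : ⟪y, x' - xb⟫ - ⟪y, xh - xb⟫ = ⟪y, x' - xh⟫ := by
      rw [← inner_sub_right]
      congr 1
      abel
    have hKu : K * ‖x' - xh‖^2 ≤ ε' * ‖x' - xh‖ := by
      have h6 : K * ‖x' - xh‖ ≤ ε' := by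
        rw [← le_div_iff₀' hK]
        exact le_of_lt hu1
      nlinarith [norm_nonneg (x' - xh)]
    simp only [hφdef] at hmin
    linarith [hmin, hexp, hinner, hyy, hKu]
  -- wrap up : properties of xh
  have hxhxb : xh - xb = t • p + (xh - z) := by simp only [hzdef]; abel
  have htp : ‖t • p‖ = t := by
    rw [norm_smul, hp, Real.norm_eq_abs, abs_of_pos ht]; ring
  have hNlb : t/2 ≤ ‖xh - xb‖ := by
    have h7 : ‖t • p‖ ≤ ‖xh - xb‖ + ‖xh - z‖ := by
      have : t • p = (xh - xb) - (xh - z) := by rw [hxhxb]; abel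
      rw [this]
      exact norm_sub_le _ _
    rw [htp] at h7
    nlinarith
  have hN : 0 < ‖xh - xb‖ := by nlinarith
  have hne : xh ≠ xb := by
    intro h
    rw [h, sub_self, norm_zero] at hN
    exact lt_irrefl 0 hN
  have hnb : ‖xh - xb‖ ≤ ε := le_trans (hball xh hxhB).1 h2tε
  have hdir : ‖‖xh - xb‖⁻¹ • (xh - xb) - p‖ ≤ ε := by
    set N : ℝ := ‖xh - xb‖ with hNdef
    have e1 : N⁻¹ • (xh - xb) - p = N⁻¹ • ((xh - xb) - N • p) := by
      rw [smul_sub N⁻¹ (xh - xb) (N • p), smul_smul, inv_mul_cancel₀ (ne_of_gt hN), one_smul]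
    have e2 : (xh - xb) - N • p = (xh - z) + (t - N) • p := by
      rw [hxhxb, sub_smul]; abel
    have e3 : ‖(xh - xb) - N • p‖ ≤ ‖xh - z‖ + |t - N| := by
      rw [e2]
      calc ‖(xh - z) + (t - N) • p‖ ≤ ‖xh - z‖ + ‖(t - N) • p‖ := norm_add_le _ _
        _ = ‖xh - z‖ + |t - N| := by rw [norm_smul, hp, Real.norm_eq_abs, mul_one]
    have e4 : |t - N| ≤ ‖xh - z‖ := by
      have := abs_norm_sub_norm_le (t • p) (xh - xb)
      rw [htp] at this
      have e5 : t • p - (xh - xb) = -(xh - z) := by rw [hxhxb]; abel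
      rw [e5, norm_neg] at this
      exact this
    rw [e1, norm_smul, Real.norm_eq_abs, abs_of_pos (inv_pos.mpr hN)]
    have e6 : ‖(xh - xb) - N • p‖ ≤ ρ * t := by
      calc ‖(xh - xb) - N • p‖ ≤ ‖xh - z‖ + |t - N| := e3
        _ ≤ ρ * t / 2 + ρ * t / 2 := by linarith [hxhz, e4]
        _ = ρ * t := by ring
    have h8 : ρ * t ≤ N * (2 * ρ) := by nlinarith
    calc N⁻¹ * ‖(xh - xb) - N • p‖ ≤ N⁻¹ * (ρ * t) :=
          mul_le_mul_of_nonneg_left e6 (by positivity)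
      _ ≤ N⁻¹ * (N * (2 * ρ)) := mul_le_mul_of_nonneg_left h8 (by positivity)
      _ = 2 * ρ := by field_simp
      _ ≤ ε := by linarith
  exact ⟨xh, v, hne, hnb, hdir, hvF, hvy⟩

/-- main technical lemma: for a unit direction `p` and any
`y ∈ ⋂_{i ∈ I(xb,p)} Argmax_{v ∈ ∂f_i(xb)} ⟪v,p⟫` there are sequences `x_k → xb`
with `(x_k - xb)/‖x_k - xb‖ → p` and `y_k → y` with `y_k ∈ ∂f(x_k)`. -/
theorem main_technical_lemma {n : ℕ} {ι : Type*} [Fintype ι]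
    (X : Set (En n)) (hX : IsOpen X)
    (fi : ι → En n → ℝ) (f : En n → ℝ)
    (hf : ∀ x : En n, IsLeast (Set.range fun i => fi i x) (f x))
    (xb : En n) (hxb : xb ∈ X)
    (hcont : ∀ i, Continuous (fi i))
    (di : ι → En n → ℝ) (hdd : ∀ i, HadamardDD (fi i) xb (di i))
    (hconv : ∀ i, ConvexOn ℝ Set.univ (di i))
    (hpos : ∀ i (p : En n) (c : ℝ), 0 < c → di i (c • p) = c * di i p)
    (p : En n) (hp : ‖p‖ = 1) (y : En n)
    (hy : ∀ i : ι,
      (fi i xb = f xb ∧ ∀ i' : ι, fi i' xb = f xb → di i p ≤ di i' p) →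
        y ∈ FSubdiff (fi i) xb ∧ ⟪y, p⟫ = di i p) :
    ∃ xk yk : ℕ → En n,
      Tendsto xk atTop (𝓝 xb) ∧ (∀ k, xk k ≠ xb) ∧
      Tendsto (fun k => ‖xk k - xb‖⁻¹ • (xk k - xb)) atTop (𝓝 p) ∧
      (∀ k, yk k ∈ FSubdiff f (xk k)) ∧ Tendsto yk atTop (𝓝 y) := by
  have hkey := fun (k : ℕ) => key fi f hf xb hcont di hdd p hp y hy
      (show (0:ℝ) < ((k:ℝ)+1)⁻¹ by positivity)
  choose x v hne hd hdir hF hv using hkey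
  have htend : Tendsto (fun k : ℕ => ((k:ℝ)+1)⁻¹) atTop (𝓝 0) := by
    simpa using tendsto_one_div_add_atTop_nhds_zero_nat (𝕜 := ℝ)
  refine ⟨x, v, ?_, hne, ?_, hF, ?_⟩
  · exact tendsto_iff_norm_sub_tendsto_zero.mpr
      (squeeze_zero (fun k => norm_nonneg _) hd htend)
  · exact tendsto_iff_norm_sub_tendsto_zero.mpr
      (squeeze_zero (fun k => norm_nonneg _) hdir htend)
  · exact tendsto_iff_norm_sub_tendsto_zero.mpr
      (squeeze_zero (fun k => norm_nonneg _) hv htend)
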